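/- Let p be a prime and let V = {v_0 = 0, v_1, ..., v_{p−1}} ⊆ ℤ^n be a set of p elements containing 0 such that v_1, ..., v_{p−1} generate ℤ^n as an abelian group. Then there exists a tiling of ℤ^n by translates of V if and only if there exists a group homomorphism φ : ℤ^n → ℤ/pℤ whose restriction to V is a bijection from V onto ℤ/pℤ. -/

import Mathlib

/-- A set `L ⊆ ℤ^n` tiles `ℤ^n` by translates of `V` if every `x ∈ ℤ^n` has a unique
representation `x = v + l` with `v ∈ V` and `l ∈ L`. -/
def IsTiling {n : ℕ} (V L : Set (Fin n → ℤ)) : Prop :=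
  ∀ x : Fin n → ℤ, ∃! p : (Fin n → ℤ) × (Fin n → ℤ),
    p.1 ∈ V ∧ p.2 ∈ L ∧ x = p.1 + p.2

open Classical in
noncomputable def chiL {n : ℕ} (p : ℕ) (L : Set (Fin n → ℤ)) : (Fin n → ℤ) → ZMod p :=
  fun t => if t ∈ L then 1 else 0

noncomputable def TT {n p : ℕ} (L : Set (Fin n → ℤ)) (z : Fin n → ℤ) :
    AddMonoidAlgebra (ZMod p) (Fin n → ℤ) →+ ZMod p :=
  (Finsupp.liftAddHom (fun t => AddMonoidHom.mulRight (chiL p L (z - t)))).comp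
    AddMonoidAlgebra.coeffAddEquiv.toAddMonoidHom

lemma TT_single {n p : ℕ} (L : Set (Fin n → ℤ)) (z s : Fin n → ℤ) (c : ZMod p) :
    TT L z (AddMonoidAlgebra.single s c) = c * chiL p L (z - s) :=
  by show Finsupp.liftAddHom _ (Finsupp.single s c) = _; erw [Finsupp.liftAddHom_apply, Finsupp.sum_single_index] <;> simp

lemma TT_shift {n p : ℕ} (L : Set (Fin n → ℤ)) (z s : Fin n → ℤ)
    (f : AddMonoidAlgebra (ZMod p) (Fin n → ℤ)) :
    TT L z (AddMonoidAlgebra.single s 1 * f) = TT L (z - s) f := by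
  induction f using AddMonoidAlgebra.induction_linear with
  | zero => simp
  | add f g hf hg => rw [mul_add, map_add, map_add, hf, hg]
  | single t c =>
      rw [AddMonoidAlgebra.single_mul_single, one_mul, TT_single, TT_single, sub_sub]

section stepA
variable {n p : ℕ} (V : Finset (Fin n → ℤ)) (L : Set (Fin n → ℤ))

noncomputable def AV (V : Finset (Fin n → ℤ)) : AddMonoidAlgebra (ZMod p) (Fin n → ℤ) :=
  ∑ v ∈ V, AddMonoidAlgebra.single v 1

lemma TT_mulA (z : Fin n → ℤ) (g : AddMonoidAlgebra (ZMod p) (Fin n → ℤ)) :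
    TT L z (AV (p := p) V * g) = ∑ v ∈ V, TT L (z - v) g := by
  rw [AV, Finset.sum_mul, map_sum]
  exact Finset.sum_congr rfl fun v _ => TT_shift L z v g

lemma TT_A (hT : IsTiling (V : Set (Fin n → ℤ)) L) (z : Fin n → ℤ) :
    TT L z (AV (p := p) V) = 1 := by
  have : TT L z (AV (p := p) V) = ∑ v ∈ V, chiL p L (z - v) := by
    rw [AV, map_sum]
    exact Finset.sum_congr rfl fun v _ => by rw [TT_single, one_mul]
  rw [this]
  obtain ⟨⟨v₀, l₀⟩, ⟨hv₀, hl₀, hz⟩, huniq⟩ := hT z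
  rw [Finset.sum_eq_single_of_mem v₀ hv₀]
  · have : z - v₀ ∈ L := by rw [hz]; simpa using hl₀
    simp [chiL, this]
  · intro v hv hne
    have : z - v ∉ L := by
      intro hmem
      have := huniq (v, z - v) ⟨hv, hmem, by ring⟩
      exact hne (by simpa using congrArg Prod.fst this)
    simp [chiL, this]

lemma TT_A_pow_vanish (hp : p.Prime) (hT : IsTiling (V : Set (Fin n → ℤ)) L)
    (hcard : V.card = p) (k : ℕ) (z : Fin n → ℤ) :
    TT L z (AV (p := p) V ^ (k + 2)) = 0 := by
  induction k generalizing z with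
  | zero =>
      rw [pow_two, TT_mulA]
      have : ∀ v ∈ V, TT L (z - v) (AV (p := p) V) = 1 := fun v _ => TT_A V L hT _
      rw [Finset.sum_congr rfl this, Finset.sum_const, hcard, nsmul_eq_mul, mul_one,
        ZMod.natCast_self]
  | succ k ih =>
      rw [pow_succ', TT_mulA]
      exact Finset.sum_eq_zero fun v _ => ih _

lemma AV_pow_p (hp : p.Prime) :
    AV (p := p) V ^ p = ∑ v ∈ V, AddMonoidAlgebra.single (p • v) 1 := by
  haveI : Fact p.Prime := ⟨hp⟩
  haveI : CharP (AddMonoidAlgebra (ZMod p) (Fin n → ℤ)) p := by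
    refine charP_of_injective_algebraMap (R := ZMod p) ?_ p
    rw [AddMonoidAlgebra.coe_algebraMap]
    intro a b hab
    simpa using congrArg (fun f => f.coeff 0) hab
  haveI : ExpChar (AddMonoidAlgebra (ZMod p) (Fin n → ℤ)) p := ExpChar.prime hp
  rw [AV, sum_pow_char (p := p)]
  exact Finset.sum_congr rfl fun v _ => by rw [AddMonoidAlgebra.single_pow, one_pow]

lemma key_congruence (hp : p.Prime) (hT : IsTiling (V : Set (Fin n → ℤ)) L)
    (hcard : V.card = p) (y : Fin n → ℤ) :
    ∑ v ∈ V, chiL p L (y - p • v) = 0 := by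
  have h2 : (p - 2) + 2 = p := by have := hp.two_le; omega
  have hv := TT_A_pow_vanish V L hp hT hcard (p - 2) y
  rw [h2, AV_pow_p V hp, map_sum] at hv
  rw [← hv]
  exact Finset.sum_congr rfl fun v _ => by rw [TT_single, one_mul]

lemma all_or_none (hp : p.Prime) (hT : IsTiling (V : Set (Fin n → ℤ)) L)
    (hcard : V.card = p) (y : Fin n → ℤ)
    (hex : ∃ v₀ ∈ V, y - p • v₀ ∈ L) : ∀ v ∈ V, y - p • v ∈ L := by
  classical
  have hsum := key_congruence V L hp hT hcard y
  have hcount : ∑ v ∈ V, chiL p L (y - p • v)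
      = ((V.filter (fun v => y - p • v ∈ L)).card : ZMod p) := by
    rw [Finset.card_filter, Nat.cast_sum]
    refine Finset.sum_congr rfl fun v _ => ?_
    by_cases h : y - p • v ∈ L <;> simp [chiL, h]
  have hdvd : p ∣ (V.filter (fun v => y - p • v ∈ L)).card := by
    have : (((V.filter (fun v => y - p • v ∈ L)).card : ℕ) : ZMod p) = 0 := by
      rw [← hcount, hsum]
    exact (ZMod.natCast_eq_zero_iff _ p).mp this
  have hle : (V.filter (fun v => y - p • v ∈ L)).card ≤ p :=
    hcard ▸ Finset.card_filter_le _ _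
  obtain ⟨v₀, hv₀, hv₀L⟩ := hex
  have hpos : 0 < (V.filter (fun v => y - p • v ∈ L)).card :=
    Finset.card_pos.mpr ⟨v₀, Finset.mem_filter.mpr ⟨hv₀, hv₀L⟩⟩
  have hseq : (V.filter (fun v => y - p • v ∈ L)).card = p :=
    le_antisymm hle (Nat.le_of_dvd hpos hdvd)
  have heq : V.filter (fun v => y - p • v ∈ L) = V :=
    Finset.eq_of_subset_of_card_le (Finset.filter_subset _ _) (by rw [hseq, hcard])
  intro v hv
  rw [← heq] at hv
  exact (Finset.mem_filter.mp hv).2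

lemma L_invariant (hp : p.Prime) (hT : IsTiling (V : Set (Fin n → ℤ)) L)
    (h0 : (0 : Fin n → ℤ) ∈ V) (hcard : V.card = p)
    (hgen : AddSubgroup.closure ((V.erase 0 : Finset (Fin n → ℤ)) : Set (Fin n → ℤ)) = ⊤) :
    ∀ t : Fin n → ℤ, ∀ l ∈ L, l + p • t ∈ L := by
  -- first, invariance for v ∈ V
  have hVinv : ∀ v ∈ V, ∀ l ∈ L, l + p • v ∈ L ∧ l - p • v ∈ L := by
    intro v hv l hl
    constructor
    · have := all_or_none V L hp hT hcard (l + p • v) ⟨v, hv, by abel_nf; simpa using hl⟩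
      simpa using this 0 h0
    · have := all_or_none V L hp hT hcard l ⟨0, h0, by simpa using hl⟩
      exact this v hv
  -- subgroup of invariance directions
  let S : AddSubgroup (Fin n → ℤ) :=
    { carrier := {t | ∀ l ∈ L, l + p • t ∈ L ∧ l - p • t ∈ L}
      zero_mem' := by intro l hl; constructor <;> simpa using hl
      add_mem' := by
        intro a b ha hb l hl
        constructor
        · have h1 := (ha l hl).1
          have h2 := (hb _ h1).1
          rw [smul_add, ← add_assoc]; exact h2
        · have h1 := (ha l hl).2
          have h2 := (hb _ h1).2
          rw [smul_add, ← sub_sub]; exact h2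
      neg_mem' := by
        intro a ha l hl
        have h1 := (ha l hl).2
        have h2 := (ha l hl).1
        constructor
        · rw [smul_neg, ← sub_eq_add_neg]; exact h1
        · rw [smul_neg, sub_neg_eq_add]; exact h2 }
  have hVS : ∀ v ∈ V, v ∈ S := fun v hv => fun l hl => hVinv v hv l hl
  have hStop : S = ⊤ := by
    rw [← top_le_iff, ← hgen, AddSubgroup.closure_le]
    intro v hv
    exact hVS v (Finset.mem_of_mem_erase (by exact_mod_cast hv))
  intro t l hl
  have : t ∈ S := hStop ▸ AddSubgroup.mem_top t
  exact (this l hl).1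
end stepA

section stepB
variable {n p : ℕ}

/-- reduction mod p, coordinatewise -/
def redp (n p : ℕ) : (Fin n → ℤ) →+ (Fin n → ZMod p) where
  toFun x := fun i => (x i : ZMod p)
  map_zero' := by funext i; simp
  map_add' x y := by funext i; push_cast; simp

lemma redp_eq_iff {x y : Fin n → ℤ} (hx : redp n p x = redp n p y) :
    ∃ t : Fin n → ℤ, x = y + p • t := by
  refine ⟨fun i => (x i - y i) / p, funext fun i => ?_⟩
  have hi : ((x i - y i : ℤ) : ZMod p) = 0 := by
    have := congrFun hx i
    simp only [redp, AddMonoidHom.coe_mk, ZeroHom.coe_mk] at this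
    push_cast
    rw [this]; ring
  have hdvd : (p : ℤ) ∣ x i - y i := (ZMod.intCast_zmod_eq_zero_iff_dvd _ p).mp hi
  have : (p : ℤ) * ((x i - y i) / p) = x i - y i := Int.mul_ediv_cancel' hdvd
  simp only [Pi.add_apply, Pi.smul_apply, nsmul_eq_mul]
  show x i = y i + (p : ℤ) * ((x i - y i) / p)
  omega

lemma redp_smul_p (t : Fin n → ℤ) : redp n p (p • t) = 0 := by
  funext i
  simp only [redp, AddMonoidHom.coe_mk, ZeroHom.coe_mk, Pi.smul_apply, nsmul_eq_mul]
  push_cast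
  simp [ZMod.natCast_self]

lemma redp_surj [NeZero p] : Function.Surjective (redp n p) := by
  intro g
  refine ⟨fun i => ((g i).val : ℤ), funext fun i => ?_⟩
  simp only [redp, AddMonoidHom.coe_mk, ZeroHom.coe_mk]
  rw [Int.cast_natCast, ZMod.natCast_val, ZMod.cast_id]
end stepB

section stepB2
variable {n p : ℕ} (V : Finset (Fin n → ℤ)) (L : Set (Fin n → ℤ))

lemma injOn_redp (hT : IsTiling (V : Set (Fin n → ℤ)) L)
    (hInv : ∀ t : Fin n → ℤ, ∀ l ∈ L, l + p • t ∈ L) :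
    Set.InjOn (redp n p) (V : Set (Fin n → ℤ)) := by
  intro v₁ hv₁ v₂ hv₂ hred
  obtain ⟨⟨v₀, l₀⟩, ⟨_, hl₀, _⟩, _⟩ := hT 0
  obtain ⟨t, ht⟩ := redp_eq_iff hred
  obtain ⟨q, hq, huniq⟩ := hT (v₁ + l₀)
  have h1 : (v₁, l₀) = q := huniq (v₁, l₀) ⟨hv₁, hl₀, rfl⟩
  have h2 : (v₂, l₀ + p • t) = q := by
    refine huniq (v₂, l₀ + p • t) ⟨hv₂, hInv t l₀ hl₀, ?_⟩
    simp only
    rw [ht]; ring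
  have := h1.trans h2.symm
  exact congrArg Prod.fst this

lemma tiling_mod (hT : IsTiling (V : Set (Fin n → ℤ)) L) [NeZero p]
    (hInv : ∀ t : Fin n → ℤ, ∀ l ∈ L, l + p • t ∈ L) (g : Fin n → ZMod p) :
    ∃! q : (Fin n → ZMod p) × (Fin n → ZMod p),
      q.1 ∈ V.image (redp n p) ∧ q.2 ∈ redp n p '' L ∧ g = q.1 + q.2 := by
  classical
  obtain ⟨x, rfl⟩ := redp_surj (p := p) g
  obtain ⟨⟨v, l⟩, ⟨hv, hl, hx⟩, huniq⟩ := hT x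
  refine ⟨(redp n p v, redp n p l), ⟨Finset.mem_image_of_mem _ hv, ⟨l, hl, rfl⟩, by
    rw [hx]; simp⟩, ?_⟩
  rintro ⟨a, b⟩ ⟨ha, hb, hab⟩
  obtain ⟨v', hv', rfl⟩ := Finset.mem_image.mp ha
  obtain ⟨l', hl', rfl⟩ := hb
  have : redp n p x = redp n p (v' + l') := by rw [hab]; simp
  obtain ⟨t, ht⟩ := redp_eq_iff this
  have hpair : (v', l' + p • t) = (v, l) := by
    refine huniq (v', l' + p • t) ⟨hv', hInv t l' hl', ?_⟩
    simp only
    rw [ht]; ring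
  have hv'' : v' = v := congrArg Prod.fst hpair
  have hl'' : l' + p • t = l := congrArg Prod.snd hpair
  have : redp n p l' = redp n p l := by
    rw [← hl'']; rw [map_add, redp_smul_p, add_zero]
  rw [hv'', this]
end stepB2

section roots
variable {p : ℕ}

noncomputable def ep (p : ℕ) : ZMod p → ℂ :=
  fun a => Complex.exp (2 * Real.pi * Complex.I / p) ^ a.val

lemma zeta_pow_mod (hp : p ≠ 0) (x : ℕ) :
    Complex.exp (2 * Real.pi * Complex.I / p) ^ x
      = Complex.exp (2 * Real.pi * Complex.I / p) ^ (x % p) := by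
  have hζ : Complex.exp (2 * Real.pi * Complex.I / p) ^ p = 1 :=
    (Complex.isPrimitiveRoot_exp p hp).pow_eq_one
  conv_lhs => rw [← Nat.mod_add_div x p, pow_add, pow_mul, hζ, one_pow, mul_one]

lemma ep_add [NeZero p] (a b : ZMod p) : ep p (a + b) = ep p a * ep p b := by
  rw [ep, ep, ep, ZMod.val_add, ← pow_add, ← zeta_pow_mod (NeZero.ne p)]

lemma ep_zero [NeZero p] : ep p 0 = 1 := by
  rw [ep, ZMod.val_zero, pow_zero]

lemma ep_sum [NeZero p] {ι : Type*} (s : Finset ι) (f : ι → ZMod p) :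
    ep p (∑ i ∈ s, f i) = ∏ i ∈ s, ep p (f i) := by
  classical
  induction s using Finset.cons_induction with
  | empty => simp [ep_zero]
  | cons i s hi ih => rw [Finset.sum_cons, Finset.prod_cons, ep_add, ih]

lemma zmod_sum_range [NeZero p] {M : Type*} [AddCommMonoid M] (f : ℕ → M) :
    ∑ a : ZMod p, f a.val = ∑ i ∈ Finset.range p, f i := by
  refine Finset.sum_bij' (fun a _ => a.val) (fun i _ => (i : ZMod p)) ?_ ?_ ?_ ?_ ?_
  · intro a _; exact Finset.mem_range.mpr (ZMod.val_lt a)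
  · intro i _; exact Finset.mem_univ _
  · intro a _; simp [ZMod.natCast_val, ZMod.cast_id]
  · intro i hi; exact ZMod.val_cast_of_lt (Finset.mem_range.mp hi)
  · intro a _; rfl

lemma sum_ep [NeZero p] (hp : p.Prime) : ∑ a : ZMod p, ep p a = 0 :=
  (zmod_sum_range (fun i => Complex.exp (2 * Real.pi * Complex.I / p) ^ i)).trans
    ((Complex.isPrimitiveRoot_exp p hp.ne_zero).geom_sum_eq_zero hp.one_lt)

lemma sum_ep_mul [NeZero p] (hp : p.Prime) (c : ZMod p) (hc : c ≠ 0) :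
    ∑ a : ZMod p, ep p (c * a) = 0 := by
  haveI : Fact p.Prime := ⟨hp⟩
  exact (Equiv.sum_comp (Equiv.mulLeft₀ c hc) (ep p)).trans (sum_ep hp)

lemma count_eq_one (hp : p.Prime) [NeZero p] (m : ZMod p → ℕ)
    (hsum : ∑ j : ZMod p, m j = p)
    (hzero : ∑ j : ZMod p, (m j : ℂ) * ep p j = 0) : ∀ j, m j = 1 := by
  classical
  set ζ := Complex.exp (2 * Real.pi * Complex.I / p) with hζdef
  have hζ : IsPrimitiveRoot ζ p := Complex.isPrimitiveRoot_exp p hp.ne_zero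
  set P : Polynomial ℚ :=
    ∑ i ∈ Finset.range p, Polynomial.C ((m (i : ZMod p) : ℚ)) * Polynomial.X ^ i with hP
  have hcoeff : ∀ k, P.coeff k = if k ∈ Finset.range p then (m (k : ZMod p) : ℚ) else 0 := by
    intro k
    rw [hP, Polynomial.finset_sum_coeff]
    rw [Finset.sum_congr rfl (fun i _ => by
      rw [Polynomial.coeff_C_mul, Polynomial.coeff_X_pow])]
    simp only [mul_ite, mul_one, mul_zero]
    exact Finset.sum_ite_eq (Finset.range p) k _
  have haeval : Polynomial.aeval ζ P = 0 := by
    rw [hP, map_sum]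
    have : ∀ i ∈ Finset.range p,
        Polynomial.aeval ζ (Polynomial.C ((m (i : ZMod p) : ℚ)) * Polynomial.X ^ i)
          = (m (i : ZMod p) : ℂ) * ζ ^ i := by
      intro i _
      simp [Polynomial.aeval_C, Polynomial.aeval_X_pow]
    rw [Finset.sum_congr rfl this, ← zmod_sum_range (p := p) (fun i => (m (i : ZMod p) : ℂ) * ζ ^ i)]
    rw [← hzero]
    refine Finset.sum_congr rfl fun j _ => ?_
    simp [ZMod.natCast_val, ZMod.cast_id, ep, hζdef]
  have hdvd : Polynomial.cyclotomic p ℚ ∣ P := by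
    rw [Polynomial.cyclotomic_eq_minpoly_rat hζ hp.pos]
    exact minpoly.dvd ℚ ζ haeval
  obtain ⟨Q, hQ⟩ := hdvd
  have hPne : P ≠ 0 := by
    obtain ⟨j, hj⟩ : ∃ j : ZMod p, m j ≠ 0 := by
      by_contra h
      push_neg at h
      rw [Finset.sum_congr rfl (fun j _ => h j)] at hsum
      simp at hsum
      exact hp.ne_zero hsum.symm
    intro h
    have := hcoeff j.val
    rw [h, Polynomial.coeff_zero, if_pos (Finset.mem_range.mpr (ZMod.val_lt j))] at this
    rw [ZMod.natCast_val, ZMod.cast_id] at this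
    exact hj (by exact_mod_cast this.symm)
  haveI : Fact p.Prime := ⟨hp⟩
  have hΦne : Polynomial.cyclotomic p ℚ ≠ 0 := (Polynomial.cyclotomic.monic p ℚ).ne_zero
  have hQne : Q ≠ 0 := by rintro rfl; rw [mul_zero] at hQ; exact hPne hQ
  have hdegP : P.natDegree ≤ p - 1 := by
    rw [hP]
    refine Polynomial.natDegree_sum_le_of_forall_le _ _ fun i hi => ?_
    refine le_trans (Polynomial.natDegree_C_mul_le _ _) ?_
    rw [Polynomial.natDegree_X_pow]
    exact Nat.le_sub_one_of_lt (Finset.mem_range.mp hi)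
  have hdegΦ : (Polynomial.cyclotomic p ℚ).natDegree = p - 1 := by
    rw [Polynomial.natDegree_cyclotomic, Nat.totient_prime hp]
  have hdegQ : Q.natDegree = 0 := by
    have := Polynomial.natDegree_mul hΦne hQne
    rw [← hQ, hdegΦ] at this
    omega
  obtain ⟨c, rfl⟩ : ∃ c, Q = Polynomial.C c :=
    ⟨Q.coeff 0, Polynomial.eq_C_of_natDegree_eq_zero hdegQ⟩
  -- coefficients of P are all c
  have hcoeffc : ∀ i ∈ Finset.range p, (m (i : ZMod p) : ℚ) = c := by
    intro i hi
    have h1 := hcoeff i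
    rw [if_pos hi] at h1
    rw [hQ, Polynomial.coeff_mul_C, Polynomial.cyclotomic_prime,
      Polynomial.finset_sum_coeff] at h1
    rw [Finset.sum_congr rfl (fun k _ => Polynomial.coeff_X_pow k i),
      Finset.sum_ite_eq (Finset.range p) i (fun _ => (1 : ℚ)), if_pos hi, one_mul] at h1
    exact h1.symm
  have hc1 : c = 1 := by
    have hs : ∑ i ∈ Finset.range p, (m (i : ZMod p) : ℚ) = ((p : ℕ) : ℚ) := by
      rw [← zmod_sum_range (p := p) (fun i => (m (i : ZMod p) : ℚ))]
      have h2 : ∀ a : ZMod p, (m ((a.val : ℕ) : ZMod p) : ℚ) = (m a : ℚ) := fun a => by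
        simp [ZMod.natCast_val, ZMod.cast_id]
      rw [Finset.sum_congr rfl (fun a _ => h2 a)]
      exact_mod_cast congrArg (Nat.cast : ℕ → ℚ) hsum
    rw [Finset.sum_congr rfl hcoeffc, Finset.sum_const, Finset.card_range,
      nsmul_eq_mul] at hs
    have hppos : (0 : ℚ) < p := by exact_mod_cast hp.pos
    have hppos : (0:ℚ) < p := by exact_mod_cast hp.pos
    field_simp at hs
    nlinarith [hs, hppos]
  intro j
  have := hcoeffc j.val (Finset.mem_range.mpr (ZMod.val_lt j))
  rw [ZMod.natCast_val, ZMod.cast_id, hc1] at this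
  exact_mod_cast this
end roots

section fourier
variable {n p : ℕ}

def Bp {n p : ℕ} (w g : Fin n → ZMod p) : ZMod p := ∑ i, w i * g i

lemma Bp_comm (w g : Fin n → ZMod p) : Bp w g = Bp g w :=
  Finset.sum_congr rfl fun i _ => mul_comm _ _

lemma Bp_add (w a b : Fin n → ZMod p) : Bp w (a + b) = Bp w a + Bp w b := by
  rw [Bp, Bp, Bp, ← Finset.sum_add_distrib]
  exact Finset.sum_congr rfl fun i _ => by rw [Pi.add_apply, mul_add]

lemma Bp_zero (w : Fin n → ZMod p) : Bp w 0 = 0 := by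
  simp [Bp]

lemma Bp_zero_left (g : Fin n → ZMod p) : Bp 0 g = 0 := by
  simp [Bp]

variable [NeZero p]

lemma ep_Bp_prod (w g : Fin n → ZMod p) :
    ep p (Bp w g) = ∏ i, ep p (w i * g i) := ep_sum _ _

lemma sum_ep_Bp (hp : p.Prime) (c : Fin n → ZMod p) :
    ∑ w : Fin n → ZMod p, ep p (Bp w c) = if c = 0 then ((p : ℂ)) ^ n else 0 := by
  classical
  have h1 : ∀ w : Fin n → ZMod p, ep p (Bp w c) = ∏ i, ep p (w i * c i) := fun w =>
    ep_Bp_prod w c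
  rw [Finset.sum_congr rfl fun w _ => h1 w]
  have h2 : ∑ w : Fin n → ZMod p, ∏ i, ep p (w i * c i)
      = ∏ i, ∑ a : ZMod p, ep p (a * c i) := by
    rw [Finset.prod_univ_sum]
    rw [← Fintype.piFinset_univ]
  rw [h2]
  by_cases hc : c = 0
  · subst hc
    rw [if_pos rfl]
    have : ∀ i : Fin n, ∑ a : ZMod p, ep p (a * (0 : Fin n → ZMod p) i) = (p : ℂ) := by
      intro i
      simp only [Pi.zero_apply, mul_zero]
      rw [Finset.sum_congr rfl fun a _ => ep_zero (p := p)]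
      simp [ZMod.card]
    rw [Finset.prod_congr rfl fun i _ => this i, Finset.prod_const, Finset.card_univ,
      Fintype.card_fin]
  · rw [if_neg hc]
    obtain ⟨i₀, hi₀⟩ : ∃ i, c i ≠ 0 := by
      by_contra h; push_neg at h; exact hc (funext h)
    refine Finset.prod_eq_zero (Finset.mem_univ i₀) ?_
    rw [Finset.sum_congr rfl fun a _ => by rw [mul_comm]]
    exact sum_ep_mul hp (c i₀) hi₀

lemma VL_factor (hp : p.Prime) (V' LF : Finset (Fin n → ZMod p))
    (hT : ∀ g : Fin n → ZMod p, ∃! q : (Fin n → ZMod p) × (Fin n → ZMod p),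
      q.1 ∈ V' ∧ q.2 ∈ LF ∧ g = q.1 + q.2) (w : Fin n → ZMod p) :
    (∑ v ∈ V', ep p (Bp w v)) * (∑ l ∈ LF, ep p (Bp w l))
      = ∑ g : Fin n → ZMod p, ep p (Bp w g) := by
  classical
  rw [Finset.sum_mul_sum, ← Finset.sum_product']
  refine Finset.sum_bij (fun q _ => q.1 + q.2) (fun q _ => Finset.mem_univ _) ?_ ?_ ?_
  · rintro ⟨a, b⟩ hab ⟨a', b'⟩ hab' heq
    dsimp only at heq
    rw [Finset.mem_product] at hab hab'
    obtain ⟨q, _, huniq⟩ := hT (a + b)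
    have h1 := huniq (a, b) ⟨hab.1, hab.2, rfl⟩
    have h2 := huniq (a', b') ⟨hab'.1, hab'.2, heq⟩
    rw [h1, h2]
  · intro g _
    obtain ⟨q, ⟨hq1, hq2, hq3⟩, _⟩ := hT g
    exact ⟨q, Finset.mem_product.mpr ⟨hq1, hq2⟩, hq3.symm⟩
  · rintro ⟨a, b⟩ _
    rw [Bp_add, ep_add]

lemma exists_zero_Vhat (hp : p.Prime) (V' LF : Finset (Fin n → ZMod p))
    (hcardV : V'.card = p)
    (hT : ∀ g : Fin n → ZMod p, ∃! q : (Fin n → ZMod p) × (Fin n → ZMod p),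
      q.1 ∈ V' ∧ q.2 ∈ LF ∧ g = q.1 + q.2) :
    ∃ w : Fin n → ZMod p, ∑ v ∈ V', ep p (Bp w v) = 0 := by
  classical
  by_contra hcon
  push_neg at hcon
  -- L-hat vanishes away from 0
  have hL0 : ∀ w : Fin n → ZMod p, w ≠ 0 → ∑ l ∈ LF, ep p (Bp w l) = 0 := by
    intro w hw
    have := VL_factor hp V' LF hT w
    have hr : ∑ g : Fin n → ZMod p, ep p (Bp w g) = 0 := by
      have h1 : ∀ g : Fin n → ZMod p, ep p (Bp w g) = ep p (Bp g w) := fun g => by rw [Bp_comm]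
      rw [Finset.sum_congr rfl fun g _ => h1 g, sum_ep_Bp hp w, if_neg hw]
    rw [hr] at this
    rcases mul_eq_zero.mp this with h | h
    · exact absurd h (hcon w)
    · exact h
  -- cardinality of the product
  have hcards : V'.card * LF.card = p ^ n := by
    have : (V' ×ˢ LF).card = (Finset.univ : Finset (Fin n → ZMod p)).card := by
      refine Finset.card_bij (fun q _ => q.1 + q.2) (fun q _ => Finset.mem_univ _) ?_ ?_
      · rintro ⟨a, b⟩ hab ⟨a', b'⟩ hab' heq
        dsimp only at heq
        rw [Finset.mem_product] at hab hab'
        obtain ⟨q, _, huniq⟩ := hT (a + b)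
        have h1 := huniq (a, b) ⟨hab.1, hab.2, rfl⟩
        have h2 := huniq (a', b') ⟨hab'.1, hab'.2, heq⟩
        rw [h1, h2]
      · intro g _
        obtain ⟨q, ⟨hq1, hq2, hq3⟩, _⟩ := hT g
        exact ⟨q, Finset.mem_product.mpr ⟨hq1, hq2⟩, hq3.symm⟩
    rw [Finset.card_product] at this
    rw [this, Finset.card_univ, Fintype.card_fun, Fintype.card_fin, ZMod.card]
  have hLFne : LF.card ≠ 0 := by
    intro h
    rw [h, mul_zero] at hcards
    exact (pow_ne_zero n hp.ne_zero) hcards.symm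
  -- Fourier inversion
  have hinv : ∀ g₀ : Fin n → ZMod p,
      (LF.card : ℂ) = if g₀ ∈ LF then ((p : ℂ)) ^ n else 0 := by
    intro g₀
    have hswap : ∑ w : Fin n → ZMod p, ∑ l ∈ LF, ep p (Bp w (l + (-g₀)))
        = ∑ l ∈ LF, ∑ w : Fin n → ZMod p, ep p (Bp w (l + (-g₀))) :=
      Finset.sum_comm
    have hrhs : ∑ l ∈ LF, ∑ w : Fin n → ZMod p, ep p (Bp w (l + (-g₀)))
        = if g₀ ∈ LF then ((p : ℂ)) ^ n else 0 := by
      rw [Finset.sum_congr rfl fun l _ => sum_ep_Bp hp (l + (-g₀))]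
      have : ∀ l, l + (-g₀) = 0 ↔ l = g₀ := fun l => by
        constructor
        · intro h; have := congrArg (· + g₀) h; simpa using this
        · rintro rfl; simp
      rw [Finset.sum_congr rfl fun l _ => by rw [if_congr (this l) rfl rfl]]
      rw [Finset.sum_ite_eq' LF g₀ (fun _ => ((p:ℂ))^n)]
    have hlhs : ∑ w : Fin n → ZMod p, ∑ l ∈ LF, ep p (Bp w (l + (-g₀)))
        = (LF.card : ℂ) := by
      have hterm : ∀ w : Fin n → ZMod p, ∑ l ∈ LF, ep p (Bp w (l + (-g₀)))
          = (∑ l ∈ LF, ep p (Bp w l)) * ep p (Bp w (-g₀)) := by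
        intro w
        rw [Finset.sum_mul]
        exact Finset.sum_congr rfl fun l _ => by rw [Bp_add, ep_add]
      rw [Finset.sum_congr rfl fun w _ => hterm w]
      rw [Finset.sum_eq_single_of_mem (0 : Fin n → ZMod p) (Finset.mem_univ _)]
      · rw [Finset.sum_congr rfl fun l _ => by rw [Bp_zero_left, ep_zero],
          Finset.sum_const, Bp_zero_left, ep_zero, mul_one, nsmul_eq_mul, mul_one]
      · intro w _ hw
        rw [hL0 w hw, zero_mul]
    rw [← hrhs, ← hswap, hlhs]
  -- contradiction
  have hall : ∀ g₀ : Fin n → ZMod p, g₀ ∈ LF := by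
    intro g₀
    by_contra h
    have := hinv g₀
    rw [if_neg h] at this
    exact hLFne (by exact_mod_cast this)
  have : LF = Finset.univ := Finset.eq_univ_iff_forall.mpr hall
  rw [this, Finset.card_univ, Fintype.card_fun, Fintype.card_fin, ZMod.card, hcardV] at hcards
  have hpn : 0 < p ^ n := pow_pos hp.pos n
  have : p = 1 := by
    have := Nat.eq_of_mul_eq_mul_right hpn (hcards.trans (one_mul (p ^ n)).symm)
    exact this
  exact hp.one_lt.ne' this
end fourier


/-- For a prime-size tile `V = {0, v_1, …, v_{p−1}} ⊆ ℤ^n` whose nonzero elements generate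
`ℤ^n` as an abelian group, `V` tiles `ℤ^n` by translations if and only if there is a group
homomorphism `φ : ℤ^n → ℤ/pℤ` restricting to a bijection `V → ℤ/pℤ`. -/
theorem prime_tile_iff_lattice {n : ℕ} (p : ℕ) (hp : p.Prime) (V : Finset (Fin n → ℤ))
    (h0 : (0 : Fin n → ℤ) ∈ V) (hcard : V.card = p)
    (hgen : AddSubgroup.closure ((V.erase 0 : Finset (Fin n → ℤ)) : Set (Fin n → ℤ)) = ⊤) :
    (∃ L : Set (Fin n → ℤ), IsTiling (V : Set (Fin n → ℤ)) L) ↔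
      ∃ φ : (Fin n → ℤ) →+ ZMod p,
        Set.BijOn φ (V : Set (Fin n → ℤ)) Set.univ := by
  haveI : NeZero p := ⟨hp.ne_zero⟩
  classical
  constructor
  · rintro ⟨L, hT⟩
    have hInv := L_invariant V L hp hT h0 hcard hgen
    set V' : Finset (Fin n → ZMod p) := V.image (redp n p) with hV'
    have hInj : Set.InjOn (redp n p) (V : Set (Fin n → ℤ)) := injOn_redp V L hT hInv
    have hcardV' : V'.card = p := by
      rw [hV', Finset.card_image_of_injOn hInj, hcard]
    let LF : Finset (Fin n → ZMod p) := (Set.toFinite (redp n p '' L)).toFinset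
    have hmemLF : ∀ x, x ∈ LF ↔ x ∈ redp n p '' L := fun x => Set.Finite.mem_toFinset _
    have hT' : ∀ g : Fin n → ZMod p, ∃! q : (Fin n → ZMod p) × (Fin n → ZMod p),
        q.1 ∈ V' ∧ q.2 ∈ LF ∧ g = q.1 + q.2 := by
      intro g
      obtain ⟨q, ⟨h1, h2, h3⟩, hu⟩ := tiling_mod V L hT hInv g
      exact ⟨q, ⟨h1, (hmemLF _).mpr h2, h3⟩,
        fun r hr => hu r ⟨hr.1, (hmemLF _).mp hr.2.1, hr.2.2⟩⟩
    obtain ⟨w, hw⟩ := exists_zero_Vhat hp V' LF hcardV' hT'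
    set m : ZMod p → ℕ := fun j => (V'.filter (fun v => Bp w v = j)).card with hm
    have hmsum : ∑ j : ZMod p, m j = p := by
      have h := Finset.card_eq_sum_card_fiberwise
        (f := fun v => Bp w v) (s := V') (t := Finset.univ)
        (fun v _ => Finset.mem_univ (Bp w v))
      rw [hcardV'] at h
      exact h.symm
    have hmzero : ∑ j : ZMod p, (m j : ℂ) * ep p j = 0 := by
      rw [← hw,
        ← Finset.sum_fiberwise_of_maps_to (fun v _ => Finset.mem_univ (Bp w v))
          (fun v => ep p (Bp w v))]
      refine Finset.sum_congr rfl fun j _ => ?_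
      rw [Finset.sum_congr rfl (fun v hv => by rw [(Finset.mem_filter.mp hv).2]),
        Finset.sum_const, nsmul_eq_mul]
    have hm1 := count_eq_one hp m hmsum hmzero
    refine ⟨{ toFun := fun x => Bp w (redp n p x)
              map_zero' := by
                show Bp w (redp n p 0) = 0
                rw [map_zero, Bp_zero]
              map_add' := fun x y => by
                show Bp w (redp n p (x + y)) = Bp w (redp n p x) + Bp w (redp n p y)
                rw [map_add, Bp_add] }, ?_, ?_, ?_⟩
    · intro v _; exact Set.mem_univ _
    · intro v₁ h₁ v₂ h₂ heq
      simp only [AddMonoidHom.coe_mk, ZeroHom.coe_mk] at heq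
      have hv₁ : redp n p v₁ ∈ V' := Finset.mem_image_of_mem _ h₁
      have hv₂ : redp n p v₂ ∈ V' := Finset.mem_image_of_mem _ h₂
      have hcard1 : (V'.filter (fun v => Bp w v = Bp w (redp n p v₁))).card ≤ 1 :=
        le_of_eq (hm1 _)
      have hred : redp n p v₁ = redp n p v₂ := by
        refine Finset.card_le_one.mp hcard1 _ ?_ _ ?_
        · exact Finset.mem_filter.mpr ⟨hv₁, rfl⟩
        · exact Finset.mem_filter.mpr ⟨hv₂, heq.symm⟩
      exact hInj h₁ h₂ hred
    · intro j _
      have hpos : (V'.filter (fun v => Bp w v = j)).card = 1 := hm1 j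
      have : 0 < (V'.filter (fun v => Bp w v = j)).card := by omega
      obtain ⟨v', hv'⟩ := Finset.card_pos.mp this
      obtain ⟨hv'V, hv'j⟩ := Finset.mem_filter.mp hv'
      obtain ⟨v, hvV, rfl⟩ := Finset.mem_image.mp hv'V
      exact ⟨v, hvV, hv'j⟩
  · rintro ⟨φ, hMaps, hInjφ, hSurj⟩
    refine ⟨{x | φ x = 0}, fun x => ?_⟩
    obtain ⟨v, hv, hvx⟩ := hSurj (Set.mem_univ (φ x))
    refine ⟨(v, x - v), ⟨hv, ?_, by ring⟩, ?_⟩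
    · show φ (x - v) = 0
      rw [map_sub, hvx, sub_self]
    · rintro ⟨v', l'⟩ ⟨hv', hl', hx⟩
      have hl'0 : φ l' = 0 := hl'
      have hφv' : φ v' = φ v := by
        have := congrArg φ hx
        rw [map_add, hl'0, add_zero] at this
        rw [← this, hvx]
      have hveq : v' = v := hInjφ hv' hv hφv'
      have hleq : l' = x - v := by
        subst hveq
        have := congrArg (fun y => y - v') hx
        simpa using this.symm
      rw [Prod.ext_iff]
      exact ⟨hveq, hleq⟩
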